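/- Let G be a 2-vertex-connected undirected graph, D a nonempty subset of its edges such that G − D (the graph after deleting the edges of D) is connected. Then every edge of G belongs to a cycle containing exactly one edge of D (a D-cycle). -/

import Mathlib

open Finset

variable {V : Type*} [DecidableEq V] [Fintype V]

/-- The edge set of a (simple) cycle in `G`. -/
def IsCycleEdges (G : SimpleGraph V) (s : Finset (Sym2 V)) : Prop :=
  ∃ (u : V) (c : G.Walk u u), c.IsCycle ∧ c.edges.toFinset = s

/-- A graph is 2-vertex-connected: it has at least 3 vertices and deleting any single
vertex leaves a connected graph. -/
def TwoConnected (G : SimpleGraph V) : Prop :=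
  3 ≤ Fintype.card V ∧ ∀ v : V, (G.induce {x | x ≠ v}).Connected

section Aux
namespace DCycleAux
open SimpleGraph Walk List
set_option linter.unusedSectionVars false
set_option linter.unnecessarySimpa false
variable {V : Type*} [DecidableEq V] {G : SimpleGraph V}




lemma isPath_eq_nil_of_loop {v : V} {p : G.Walk v v} (hp : p.IsPath) : p = Walk.nil := by
  cases p with
  | nil => rfl
  | cons h q =>
    rw [Walk.cons_isPath_iff] at hp
    exact absurd q.end_mem_support hp.2

lemma path_ends_ne {u v : V} {p : G.Walk u v} (hp : p.IsPath) (hl : p.length ≠ 0) : u ≠ v := by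
  intro h
  subst h
  rw [isPath_eq_nil_of_loop hp] at hl
  simp at hl

lemma length_eq_one_of_endpoint_edge {a b : V} {p : G.Walk a b} (hp : p.IsPath)
    (he : s(a, b) ∈ p.edges) : p.length = 1 := by
  cases p with
  | nil => simp at he
  | cons h q =>
    rename_i c
    rw [Walk.edges_cons, List.mem_cons] at he
    rw [Walk.cons_isPath_iff] at hp
    rcases he with he | he
    · have : b = c ∨ (a = c ∧ b = a) := by
        rw [Sym2.eq_iff] at he
        tauto
      rcases this with rfl | ⟨rfl, rfl⟩
      · rw [isPath_eq_nil_of_loop hp.1]; rfl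
      · exact absurd rfl h.ne
    · exact absurd (q.fst_mem_support_of_mem_edges (by rwa [Sym2.eq_swap] at he)) hp.2

lemma two_le_length_of_mem_edge_ne {a b : V} {p : G.Walk a b} (hp : p.IsPath)
    {e : Sym2 V} (he : e ∈ p.edges) (hne : e ≠ s(a, b)) : 2 ≤ p.length := by
  by_contra h
  push_neg at h
  interval_cases hl : p.length
  · cases p with
    | nil => simp at he
    | cons h q => simp at hl
  · cases p with
    | nil => simp at he
    | cons h q =>
      rename_i c
      have : q.length = 0 := by simpa using hl
      have hbc : c = b := by
        cases q with
        | nil => rfl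
        | cons _ _ => simp at this
      subst hbc
      have : q = Walk.nil := by
        cases q with
        | nil => rfl
        | cons _ _ => simp at this
      subst this
      simp only [Walk.edges_cons, Walk.edges_nil, List.mem_singleton] at he
      exact hne he

lemma isPath_append' {a b c : V} {p : G.Walk a b} {q : G.Walk b c} (hp : p.IsPath) (hq : q.IsPath)
    (hint : ∀ x, x ∈ p.support → x ∈ q.support → x = b) : (p.append q).IsPath := by
  rw [Walk.isPath_def, Walk.support_append, List.nodup_append']
  refine ⟨hp.support_nodup, hq.support_nodup.tail, ?_⟩
  intro x hxp hxq
  have hxq' : x ∈ q.support := List.mem_of_mem_tail hxq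
  have hxb := hint x hxp hxq'
  have hnd := hq.support_nodup
  rw [q.support_eq_cons, List.nodup_cons] at hnd
  exact hnd.1 (hxb ▸ hxq)

lemma isCycle_append {a b : V} (hab : a ≠ b) {p : G.Walk a b} {q : G.Walk b a}
    (hp : p.IsPath) (hq : q.IsPath)
    (hint : ∀ x, x ∈ p.support → x ∈ q.support → x = a ∨ x = b)
    (hlen : 3 ≤ p.length + q.length) : (p.append q).IsCycle := by
  rw [Walk.isCycle_def]
  refine ⟨?_, ?_, ?_⟩
  · -- trail
    rw [Walk.isTrail_def, Walk.edges_append, List.nodup_append']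
    refine ⟨hp.isTrail.edges_nodup, hq.isTrail.edges_nodup, ?_⟩
    intro e hep heq
    induction e with
    | h x y =>
      have hadj := p.adj_of_mem_edges hep
      have hxp := p.fst_mem_support_of_mem_edges hep
      have hyp := p.snd_mem_support_of_mem_edges hep
      have hxq := q.fst_mem_support_of_mem_edges heq
      have hyq := q.snd_mem_support_of_mem_edges heq
      have hx := hint x hxp hxq
      have hy := hint y hyp hyq
      have hexy : s(x, y) = s(a, b) := by
        rcases hx with rfl | rfl <;> rcases hy with rfl | rfl
        · exact absurd rfl hadj.ne
        · rfl
        · rw [Sym2.eq_swap]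
        · exact absurd rfl hadj.ne
      rw [hexy] at hep heq
      have h1 := length_eq_one_of_endpoint_edge hp hep
      have h2 := length_eq_one_of_endpoint_edge hq (by rwa [Sym2.eq_swap] at heq)
      omega
  · intro hnil
    have : (p.append q).length = 0 := by rw [hnil]; rfl
    rw [Walk.length_append] at this
    omega
  · rw [Walk.support_append, p.support_eq_cons]
    simp only [List.cons_append, List.tail_cons]
    rw [List.nodup_append']
    refine ⟨hp.support_nodup.tail, hq.support_nodup.tail, ?_⟩
    intro x hxp hxq
    have hxp0 : x ∈ p.support.tail := by simpa using hxp
    have hxp' : x ∈ p.support := by rw [p.support_eq_cons]; exact List.mem_cons_of_mem _ hxp0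
    have hxq' : x ∈ q.support := List.mem_of_mem_tail hxq
    rcases hint x hxp' hxq' with rfl | rfl
    · have hnd := hp.support_nodup
      rw [p.support_eq_cons, List.nodup_cons] at hnd
      exact hnd.1 hxp0
    · have hnd := hq.support_nodup
      rw [q.support_eq_cons, List.nodup_cons] at hnd
      exact hnd.1 hxq





/-- First hit: from a walk ending in `L`, extract a path meeting `L` only at its endpoint. -/
lemma exists_first_hit {x y : V} (w : G.Walk x y) (L : List V) (hy : y ∈ L) :
    ∃ t, t ∈ L ∧ ∃ ρ : G.Walk x t, ρ.IsPath ∧ (∀ z, z ∈ ρ.support → z ∈ w.support) ∧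
      (∀ z, z ∈ ρ.support → z ∈ L → z = t) := by
  induction w with
  | nil =>
    exact ⟨_, hy, Walk.nil, by simp, by simp, by simp⟩
  | @cons a c yy hadj w₂ ih =>
    by_cases hx : a ∈ L
    · exact ⟨a, hx, Walk.nil, by simp, by simp, by simp⟩
    · obtain ⟨t, htL, ρ₂, hρ₂p, hρ₂s, hρ₂L⟩ := ih hy
      by_cases hxρ : a ∈ ρ₂.support
      · refine ⟨t, htL, ρ₂.dropUntil a hxρ, hρ₂p.dropUntil hxρ, ?_, ?_⟩
        · intro z hz
          have := ρ₂.support_dropUntil_subset hxρ hz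
          simp [hρ₂s z this]
        · intro z hz
          exact hρ₂L z (ρ₂.support_dropUntil_subset hxρ hz)
      · refine ⟨t, htL, Walk.cons hadj ρ₂, hρ₂p.cons hxρ, ?_, ?_⟩
        · intro z hz
          rw [Walk.support_cons, List.mem_cons] at hz
          rcases hz with rfl | hz
          · simp
          · simp [hρ₂s z hz]
        · intro z hz hzL
          rw [Walk.support_cons, List.mem_cons] at hz
          rcases hz with rfl | hz
          · exact absurd hzL hx
          · exact hρ₂L z hz hzL

/-- Split a walk at an edge occurrence. -/
lemma split_at_edge {a b : V} (p : G.Walk a b) {x y : V} (he : s(x, y) ∈ p.edges) :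
    ∃ (x' y' : V) (q : G.Walk a x') (hadj : G.Adj x' y') (r : G.Walk y' b),
      s(x', y') = s(x, y) ∧ p = q.append (Walk.cons hadj r) := by
  induction p with
  | nil => simp at he
  | @cons u c d hadj p₂ ih =>
    rw [Walk.edges_cons, List.mem_cons] at he
    rcases he with he | he
    · exact ⟨u, c, Walk.nil, hadj, p₂, he.symm, rfl⟩
    · obtain ⟨x', y', q, hadj', r, hxy, hp⟩ := ih he
      exact ⟨x', y', Walk.cons hadj q, hadj', r, hxy, by rw [hp, Walk.cons_append]⟩

/-- Split a cycle (based at `t`) at another vertex `z`: two internally disjoint paths. -/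
lemma cycle_split_vertex {t : V} {c : G.Walk t t} (hc : c.IsCycle) {z : V}
    (hz : z ∈ c.support) (hzt : z ≠ t) :
    (c.takeUntil z hz).IsPath ∧ (c.dropUntil z hz).IsPath ∧
      (∀ x, x ∈ (c.takeUntil z hz).support → x ∈ (c.dropUntil z hz).support → x = t ∨ x = z) := by
  set α := c.takeUntil z hz with hα
  set β := c.dropUntil z hz with hβ
  have hspec : α.append β = c := c.take_spec hz
  have hsupp : c.support = α.support ++ β.support.tail := by
    rw [← hspec, Walk.support_append]
  have htail : c.support.tail = α.support.tail ++ β.support.tail := by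
    conv_lhs => rw [hsupp]
    rw [α.support_eq_cons]
    simp
  have hndc : c.support.tail.Nodup := hc.support_nodup
  rw [htail, List.nodup_append'] at hndc
  obtain ⟨hndα, hndβ, hdisj⟩ := hndc
  have hβsupp : β.support = z :: β.support.tail := β.support_eq_cons
  have htβ : t ∈ β.support.tail := by
    have h1 : t ∈ β.support := β.end_mem_support
    rw [hβsupp] at h1
    rcases List.mem_cons.mp h1 with h | h
    · exact absurd h.symm hzt
    · exact h
  have hzα : z ∈ α.support.tail := by
    have h1 : z ∈ α.support := α.end_mem_support
    rw [α.support_eq_cons] at h1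
    rcases List.mem_cons.mp h1 with h | h
    · exact absurd h hzt
    · exact h
  have hαpath : α.IsPath := by
    constructor
    · exact hc.isTrail.takeUntil hz
    · rw [α.support_eq_cons, List.nodup_cons]
      exact ⟨fun ht => (List.disjoint_left.mp hdisj ht) htβ, hndα⟩
  have hβpath : β.IsPath := by
    constructor
    · exact hc.isTrail.dropUntil hz
    · rw [hβsupp, List.nodup_cons]
      exact ⟨fun hzmem => (List.disjoint_left.mp hdisj hzα) hzmem, hndβ⟩
  refine ⟨hαpath, hβpath, ?_⟩
  intro x hxα hxβ
  by_contra hcon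
  push_neg at hcon
  obtain ⟨hxt, hxz⟩ := hcon
  have hxα' : x ∈ α.support.tail := by
    rw [α.support_eq_cons] at hxα
    rcases List.mem_cons.mp hxα with h | h
    · exact absurd h hxt
    · exact h
  have hxβ' : x ∈ β.support.tail := by
    rw [hβsupp] at hxβ
    rcases List.mem_cons.mp hxβ with h | h
    · exact absurd h hxz
    · exact h
  exact (List.disjoint_left.mp hdisj hxα') hxβ'






lemma end_mem_support_tail {u v : V} (p : G.Walk u v) (h : p.length ≠ 0) :
    v ∈ p.support.tail := by
  cases p with
  | nil => simp at h
  | cons h q => simpa using q.end_mem_support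

lemma closed_mem_support_iff_tail {u : V} {p : G.Walk u u} (h : p.length ≠ 0) (x : V) :
    x ∈ p.support ↔ x ∈ p.support.tail := by
  constructor
  · intro hx
    rw [p.support_eq_cons] at hx
    rcases List.mem_cons.mp hx with rfl | hx
    · exact end_mem_support_tail p h
    · exact hx
  · exact List.mem_of_mem_tail

/-- From a cycle through edge `s(a,b)`, get the complementary path from `a` to `b`. -/
lemma cycle_split_edge {t : V} {c : G.Walk t t} (hc : c.IsCycle) {a b : V}
    (he : s(a, b) ∈ c.edges) :
    ∃ P : G.Walk a b, P.IsPath ∧ s(a, b) ∉ P.edges ∧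
      (∀ x, x ∈ P.support ↔ x ∈ c.support) ∧
      P.edges.toFinset = c.edges.toFinset.erase s(a, b) := by
  have hab : a ≠ b := (c.adj_of_mem_edges he).ne
  have ha : a ∈ c.support := c.fst_mem_support_of_mem_edges he
  set c' := c.rotate _ ha with hc'
  have hcyc' : c'.IsCycle := hc.rotate ha
  have hedges : c'.edges ~ c.edges := (c.rotate_edges _ ha).perm
  have hlc : c.length ≠ 0 := by
    intro h0
    exact hc.ne_nil (by cases c with | nil => rfl | cons h q => simp at h0)
  have hlc' : c'.length ≠ 0 := by
    intro h0
    exact hcyc'.ne_nil (by cases hcc : c' with | nil => rfl | cons h q => rw [hcc] at h0; simp at h0)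
  have hsupp : ∀ x, x ∈ c'.support ↔ x ∈ c.support := by
    intro x
    rw [closed_mem_support_iff_tail hlc' x, closed_mem_support_iff_tail hlc x,
      (c.support_rotate _ ha).mem_iff]
  have he' : s(a, b) ∈ c'.edges := hedges.mem_iff.mpr he
  have hef : c'.edges.toFinset = c.edges.toFinset := by
    ext f; simp only [List.mem_toFinset]; exact hedges.mem_iff
  clear_value c'
  cases c' with
  | nil => exact absurd rfl hcyc'.ne_nil
  | @cons _ w _ hadj q =>
    rw [Walk.cons_isCycle_iff] at hcyc'
    obtain ⟨hqpath, hqe⟩ := hcyc'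
    rw [Walk.edges_cons, List.mem_cons] at he'
    rcases he' with heq | hein
    · -- first edge is s(a,b); so w = b and q.reverse : a → b works
      have hwb : w = b := by
        rw [Sym2.eq_iff] at heq
        rcases heq with ⟨-, h⟩ | ⟨h1, h2⟩
        · exact h.symm
        · exact absurd h1 hadj.ne
      subst hwb
      refine ⟨q.reverse, hqpath.reverse, ?_, ?_, ?_⟩
      · rw [Walk.edges_reverse, List.mem_reverse]
        rw [← heq]; rwa [← heq] at hqe
      · intro x
        rw [Walk.support_reverse, List.mem_reverse, ← hsupp x, Walk.support_cons]
        constructor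
        · intro h; exact List.mem_cons_of_mem _ h
        · intro h
          rcases List.mem_cons.mp h with rfl | h
          · exact q.end_mem_support
          · exact h
      · rw [← hef, Walk.edges_cons, heq]
        rw [Walk.edges_reverse, List.toFinset_reverse]
        rw [List.toFinset_cons, Finset.erase_insert]
        rw [List.mem_toFinset]
        rwa [← heq] at hqe
    · -- s(a,b) inside q : Walk w a
      obtain ⟨x', y', q₁, hadj', q₂, hxy, hq⟩ := split_at_edge q hein
      have hqsupp : q.support = q₁.support ++ q₂.support := by
        rw [hq, Walk.support_append, Walk.support_cons]
        rfl
      have hqnd : q.support.Nodup := hqpath.support_nodup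
      have hor : (a = x' ∧ b = y') ∨ (b = x' ∧ a = y') := by
        rw [Sym2.eq_iff] at hxy
        tauto
      rcases hor with ⟨h1, h2⟩ | ⟨h1, h2⟩
      · subst h1; subst h2
        exfalso
        rw [hqsupp, List.nodup_append'] at hqnd
        exact hqnd.2.2 q₁.end_mem_support q₂.end_mem_support
      · subst h1; subst h2
        -- q = q₁ ++ cons (b,a) q₂ with q₂ : Walk a a
        have hq₂nd : q₂.support.Nodup := by
          rw [hqsupp, List.nodup_append'] at hqnd
          exact hqnd.2.1
        have hq₂nil : q₂ = Walk.nil := by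
          cases q₂ with
          | nil => rfl
          | @cons _ m _ h r =>
            exfalso
            rw [Walk.support_cons, List.nodup_cons] at hq₂nd
            exact hq₂nd.1 r.end_mem_support
        subst hq₂nil
        have hqsupp' : q.support = q₁.support ++ [a] := by simpa using hqsupp
        have hqedges : q.edges = q₁.edges ++ [s(b, a)] := by
          rw [hq, Walk.edges_append, Walk.edges_cons, Walk.edges_nil]
        have hanotq₁ : a ∉ q₁.support := by
          rw [hqsupp', List.nodup_append'] at hqnd
          intro hmem
          exact hqnd.2.2 hmem (by simp)
        have hq₁path : q₁.IsPath := by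
          constructor
          · rw [Walk.isTrail_def]
            have := hqpath.isTrail.edges_nodup
            rw [hqedges, List.nodup_append'] at this
            exact this.1
          · rw [hqsupp', List.nodup_append'] at hqnd
            exact hqnd.1
        have hbanotq₁ : s(b, a) ∉ q₁.edges := by
          have := hqpath.isTrail.edges_nodup
          rw [hqedges, List.nodup_append'] at this
          intro hmem
          exact this.2.2 hmem (by simp)
        have hawne : s(a, b) ≠ s(a, w) := by
          intro hcon
          have hwb : w = b := by
            rw [Sym2.eq_iff] at hcon
            rcases hcon with ⟨-, h⟩ | ⟨h1, -⟩
            · exact h.symm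
            · exact absurd h1 hadj.ne
          subst hwb
          apply hqe
          rw [hqedges, List.mem_append]
          right
          simp [Sym2.eq_swap]
        refine ⟨Walk.cons hadj q₁, hq₁path.cons hanotq₁, ?_, ?_, ?_⟩
        · rw [Walk.edges_cons, List.mem_cons]
          rintro (h | h)
          · exact hawne h
          · exact hbanotq₁ (by rwa [Sym2.eq_swap] at h)
        · intro x
          rw [← hsupp x, Walk.support_cons, Walk.support_cons, hqsupp']
          simp only [List.mem_cons, List.mem_append, List.mem_singleton]
          tauto
        · rw [← hef]
          ext f
          simp only [Walk.edges_cons, hqedges, List.toFinset_cons, List.toFinset_append,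
            List.toFinset_nil, Finset.mem_erase, Finset.mem_insert,
            Finset.mem_union, List.mem_toFinset, insert_empty_eq, Finset.mem_singleton]
          constructor
          · rintro (rfl | hf)
            · exact ⟨Ne.symm hawne, Or.inl rfl⟩
            · refine ⟨?_, Or.inr (Or.inl hf)⟩
              intro hcon
              subst hcon
              exact hbanotq₁ (by rwa [Sym2.eq_swap] at hf)
          · rintro ⟨hne, (rfl | hf | rfl)⟩
            · exact Or.inl rfl
            · exact Or.inr hf
            · exact absurd (Sym2.eq_swap) hne




lemma support_mapLe {G' : SimpleGraph V} (h : G ≤ G') {u v : V} (p : G.Walk u v) :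
    (p.mapLe h).support = p.support := by
  induction p with
  | nil => rfl
  | cons hadj q ih =>
    simp only [Walk.mapLe, Walk.map_cons, Walk.support_cons] at ih ⊢
    rw [ih]

lemma edges_mapLe {G' : SimpleGraph V} (h : G ≤ G') {u v : V} (p : G.Walk u v) :
    (p.mapLe h).edges = p.edges := by
  induction p with
  | nil => rfl
  | cons hadj q ih =>
    simp only [Walk.mapLe, Walk.map_cons, Walk.edges_cons] at ih ⊢
    rw [ih]
    rfl

lemma length_mapLe {G' : SimpleGraph V} (h : G ≤ G') {u v : V} (p : G.Walk u v) :
    (p.mapLe h).length = p.length := by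
  induction p with
  | nil => rfl
  | cons hadj q ih =>
    simp only [Walk.mapLe, Walk.map_cons, Walk.length_cons] at ih ⊢
    rw [ih]

section TwoConn
variable [Fintype V]

/-- In a 2-connected graph we can join any two vertices avoiding a third one. -/
lemma reach_avoid (hdel : ∀ w : V, (G.induce {x | x ≠ w}).Connected)
    {w x y : V} (hx : x ≠ w) (hy : y ≠ w) :
    ∃ p : G.Walk x y, w ∉ p.support := by
  obtain ⟨ω⟩ := (hdel w).preconnected ⟨x, hx⟩ ⟨y, hy⟩
  refine ⟨ω.map (SimpleGraph.Embedding.induce {x | x ≠ w}).toHom, ?_⟩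
  show w ∉ (ω.map (SimpleGraph.Embedding.induce {x | x ≠ w}).toHom).support
  rw [Walk.support_map]
  intro hmem
  obtain ⟨z, _, hz⟩ := List.mem_map.mp hmem
  exact z.prop hz

lemma exists_third_vertex (hcard : 3 ≤ Fintype.card V) (x y : V) :
    ∃ w : V, w ≠ x ∧ w ≠ y := by
  by_contra hcon
  push_neg at hcon
  have hsub : (Finset.univ : Finset V) ⊆ {x, y} := by
    intro z _
    by_cases hzx : z = x
    · subst hzx; simp
    · have := hcon z hzx
      subst this; simp
  have h4 : Fintype.card V ≤ 2 := by
    calc Fintype.card V = Finset.univ.card := (Finset.card_univ).symm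
    _ ≤ ({x, y} : Finset V).card := Finset.card_le_card hsub
    _ ≤ 2 := (Finset.card_insert_le _ _).trans (by simp)
  omega

lemma two_connected_connected (hcard : 3 ≤ Fintype.card V)
    (hdel : ∀ w : V, (G.induce {x | x ≠ w}).Connected) : G.Connected := by
  have hne : Nonempty V := by
    have hpos : 0 < Fintype.card V := by omega
    rcases Fintype.card_pos_iff.mp hpos with ⟨v⟩
    exact ⟨v⟩
  rw [connected_iff]
  refine ⟨fun x y => ?_, hne⟩
  by_cases hxy : x = y
  · subst hxy; exact Reachable.refl _
  · obtain ⟨w, hwx, hwy⟩ := exists_third_vertex hcard x y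
    obtain ⟨p, -⟩ := reach_avoid hdel (Ne.symm hwx) (Ne.symm hwy)
    exact ⟨p⟩

/-- 2-connected graphs are bridgeless. -/
lemma exists_path_avoiding_edge (hcard : 3 ≤ Fintype.card V)
    (hdel : ∀ w : V, (G.induce {x | x ≠ w}).Connected)
    {u v : V} (hadj : G.Adj u v) :
    ∃ p : G.Walk v u, p.IsPath ∧ s(u, v) ∉ p.edges := by
  have hGconn := two_connected_connected hcard hdel
  have hstep : ∀ {a b : V} (_ : G.Walk a b),
      ((G.deleteEdges {s(u, v)}).Reachable b u ∨ (G.deleteEdges {s(u, v)}).Reachable b v) →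
      ((G.deleteEdges {s(u, v)}).Reachable a u ∨ (G.deleteEdges {s(u, v)}).Reachable a v) := by
    intro a b ω
    induction ω with
    | nil => exact id
    | @cons z1 m1 _ h ω₂ ih =>
      intro hb
      have hm := ih hb
      by_cases hzm : s(z1, m1) = s(u, v)
      · rw [Sym2.eq_iff] at hzm
        rcases hzm with ⟨rfl, rfl⟩ | ⟨rfl, rfl⟩
        · exact Or.inl (Reachable.refl _)
        · exact Or.inr (Reachable.refl _)
      · have hKadj : (G.deleteEdges {s(u, v)}).Adj z1 m1 := by
          rw [SimpleGraph.deleteEdges_adj]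
          exact ⟨h, by simpa using hzm⟩
        rcases hm with hm | hm
        · exact Or.inl (hKadj.reachable.trans hm)
        · exact Or.inr (hKadj.reachable.trans hm)
  have hsub : ∀ z : V, (G.deleteEdges {s(u, v)}).Reachable z u ∨
      (G.deleteEdges {s(u, v)}).Reachable z v := by
    intro z
    obtain ⟨ω⟩ := hGconn.preconnected z u
    exact hstep ω (Or.inl (Reachable.refl _))
  have hKreach : (G.deleteEdges {s(u, v)}).Reachable v u := by
    by_contra hnr
    obtain ⟨w, hwu, hwv⟩ := exists_third_vertex hcard u v
    have transfer : ∀ {x y : V} (p : G.Walk x y), u ∉ p.support ∨ v ∉ p.support →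
        (G.deleteEdges {s(u, v)}).Reachable x y := by
      intro x y p hp
      have hedge : ∀ e ∈ p.edges, e ∈ (G.deleteEdges {s(u, v)}).edgeSet := by
        intro e hee
        rw [SimpleGraph.edgeSet_deleteEdges]
        refine ⟨p.edges_subset_edgeSet hee, ?_⟩
        simp only [Set.mem_singleton_iff]
        intro hcon
        subst hcon
        rcases hp with hp | hp
        · exact hp (p.fst_mem_support_of_mem_edges hee)
        · exact hp (p.snd_mem_support_of_mem_edges hee)
      exact ⟨p.transfer _ hedge⟩
    rcases hsub w with hw | hw
    · obtain ⟨p, hup⟩ := reach_avoid hdel hwu (Ne.symm hadj.ne)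
      have hwv2 : (G.deleteEdges {s(u, v)}).Reachable w v := transfer p (Or.inl hup)
      exact hnr (hwv2.symm.trans hw)
    · obtain ⟨p, hvp⟩ := reach_avoid hdel hwv (Ne.symm hadj.ne')
      have hwu2 : (G.deleteEdges {s(u, v)}).Reachable w u := transfer p (Or.inr hvp)
      exact hnr (hw.symm.trans hwu2)
  obtain ⟨ω⟩ := hKreach
  refine ⟨(ω.toPath : (G.deleteEdges {s(u, v)}).Walk v u).mapLe (G.deleteEdges_le _), ?_, ?_⟩
  · exact (Walk.mapLe_isPath _).mpr ω.toPath.property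
  · rw [edges_mapLe]
    intro hmem
    have h1 := Walk.edges_subset_edgeSet _ hmem
    rw [SimpleGraph.edgeSet_deleteEdges] at h1
    simp at h1

end TwoConn



lemma eq_of_length_zero {u v : V} (p : G.Walk u v) (h0 : p.length = 0) : u = v := by
  cases p with
  | nil => rfl
  | cons h q => simp at h0

lemma length_ne_zero_of_ne {u v : V} (p : G.Walk u v) (h : u ≠ v) : p.length ≠ 0 :=
  fun h0 => h (eq_of_length_zero p h0)

lemma cycle_length_ne_zero {t : V} {c : G.Walk t t} (hc : c.IsCycle) : c.length ≠ 0 := by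
  intro h0
  cases c with
  | nil => exact hc.ne_nil rfl
  | cons h q => simp at h0

lemma mem_support_rotate_iff {t z : V} {c : G.Walk t t} (hc : c.IsCycle) (hz : z ∈ c.support)
    (x : V) : x ∈ (c.rotate _ hz).support ↔ x ∈ c.support := by
  rw [closed_mem_support_iff_tail (cycle_length_ne_zero (hc.rotate hz)) x,
    closed_mem_support_iff_tail (cycle_length_ne_zero hc) x,
    (c.support_rotate _ hz).mem_iff]

section TwoConn
variable [Fintype V]

/-- Any two distinct vertices of a 2-connected graph lie on a common cycle. -/
lemma cycle_two_vertices_aux (hcard : 3 ≤ Fintype.card V)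
    (hdel : ∀ w : V, (G.induce {x | x ≠ w}).Connected) :
    ∀ (n : ℕ) {x y : V}, x ≠ y → ∀ (p : G.Walk y x), p.IsPath → p.length ≤ n →
    ∃ (t : V) (c : G.Walk t t), c.IsCycle ∧ x ∈ c.support ∧ y ∈ c.support := by
  intro n
  induction n with
  | zero =>
    intro x y hxy p _ hlen
    exact absurd (eq_of_length_zero p (by omega)).symm hxy
  | succ n ih =>
    intro x y hxy p hp hlen
    cases p with
    | nil => exact absurd rfl hxy
    | @cons _ v' _ h q =>
      -- h : G.Adj y v', q : G.Walk v' x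
      by_cases hvx : v' = x
      · subst hvx
        obtain ⟨p0, hp0, he0⟩ := exists_path_avoiding_edge hcard hdel (h.symm : G.Adj v' y)
        refine ⟨v', Walk.cons h.symm p0, ?_, ?_, ?_⟩
        · exact (Walk.cons_isCycle_iff p0 h.symm).mpr ⟨hp0, he0⟩
        · simp
        · rw [Walk.support_cons]
          exact List.mem_cons_of_mem _ p0.start_mem_support
      · have hqpath : q.IsPath := hp.of_cons
        have hqlen : q.length ≤ n := by
          have : (Walk.cons h q).length = q.length + 1 := by simp
          omega
        have hxv : x ≠ v' := fun hh => hvx hh.symm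
        obtain ⟨t, C, hC, hxC, hv'C⟩ := ih hxv q hqpath hqlen
        by_cases hyC : y ∈ C.support
        · exact ⟨t, C, hC, hxC, hyC⟩
        · obtain ⟨ω, hωav⟩ := reach_avoid hdel (w := v') (x := y) (y := x) h.ne hxv
          obtain ⟨t', ht'C, ρ, hρpath, hρsub, hρL⟩ := exists_first_hit ω C.support hxC
          have hv'ρ : v' ∉ ρ.support := fun hm => hωav (hρsub _ hm)
          have ht'v' : t' ≠ v' := fun hh => hv'ρ (hh ▸ ρ.end_mem_support)
          have hyt' : y ≠ t' := fun hh => hyC (hh ▸ ht'C)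
          have hC₂ : (C.rotate _ ht'C).IsCycle := hC.rotate _
          have hv'C₂ : v' ∈ (C.rotate _ ht'C).support :=
            (mem_support_rotate_iff hC ht'C v').mpr hv'C
          obtain ⟨hαpath, hβpath, hαβint⟩ := cycle_split_vertex hC₂ hv'C₂ ht'v'.symm
          set α := (C.rotate _ ht'C).takeUntil v' hv'C₂ with hα
          set β := (C.rotate _ ht'C).dropUntil v' hv'C₂ with hβ
          have hαsub : ∀ z, z ∈ α.support → z ∈ C.support := fun z hzz =>
            (mem_support_rotate_iff hC ht'C z).mp ((C.rotate _ ht'C).support_takeUntil_subset hv'C₂ hzz)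
          have hβsub : ∀ z, z ∈ β.support → z ∈ C.support := fun z hzz =>
            (mem_support_rotate_iff hC ht'C z).mp ((C.rotate _ ht'C).support_dropUntil_subset hv'C₂ hzz)
          have hxsplit : x ∈ α.support ∨ x ∈ β.support := by
            have : x ∈ (C.rotate _ ht'C).support := (mem_support_rotate_iff hC ht'C x).mpr hxC
            rw [← (C.rotate _ ht'C).take_spec hv'C₂, Walk.mem_support_append_iff] at this
            exact this
          have hρlen : ρ.length ≠ 0 := length_ne_zero_of_ne ρ hyt'
          have hq'path : (Walk.cons h.symm ρ).IsPath := hρpath.cons hv'ρ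
          rcases hxsplit with hxα | hxβ
          · -- cycle α ++ (cons h.symm ρ)
            have hαlen : α.length ≠ 0 := length_ne_zero_of_ne α ht'v'
            refine ⟨t', α.append (Walk.cons h.symm ρ), ?_, ?_, ?_⟩
            · apply isCycle_append ht'v' hαpath hq'path
              · intro z hzα hzq
                rw [Walk.support_cons, List.mem_cons] at hzq
                rcases hzq with rfl | hzρ
                · exact Or.inr rfl
                · exact Or.inl (hρL z hzρ (hαsub z hzα))
              · have : (Walk.cons h.symm ρ).length = ρ.length + 1 := by simp
                omega
            · rw [Walk.mem_support_append_iff]; exact Or.inl hxα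
            · rw [Walk.mem_support_append_iff, Walk.support_cons]
              exact Or.inr (List.mem_cons_of_mem _ ρ.start_mem_support)
          · -- cycle β ++ (cons h.symm ρ).reverse
            have hβlen : β.length ≠ 0 := length_ne_zero_of_ne β ht'v'.symm
            refine ⟨v', β.append (Walk.cons h.symm ρ).reverse, ?_, ?_, ?_⟩
            · apply isCycle_append ht'v'.symm hβpath ((Walk.isPath_reverse_iff _).mpr hq'path)
              · intro z hzβ hzq
                rw [Walk.support_reverse, List.mem_reverse, Walk.support_cons,
                  List.mem_cons] at hzq
                rcases hzq with rfl | hzρ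
                · exact Or.inl rfl
                · exact Or.inr (hρL z hzρ (hβsub z hzβ))
              · have : (Walk.cons h.symm ρ).reverse.length = ρ.length + 1 := by
                  rw [Walk.length_reverse]; simp
                omega
            · rw [Walk.mem_support_append_iff]; exact Or.inl hxβ
            · rw [Walk.mem_support_append_iff, Walk.support_reverse, List.mem_reverse,
                Walk.support_cons]
              exact Or.inr (List.mem_cons_of_mem _ ρ.start_mem_support)

lemma cycle_two_vertices (hcard : 3 ≤ Fintype.card V)
    (hdel : ∀ w : V, (G.induce {x | x ≠ w}).Connected) {x y : V} (hxy : x ≠ y) :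
    ∃ (t : V) (c : G.Walk t t), c.IsCycle ∧ x ∈ c.support ∧ y ∈ c.support := by
  obtain ⟨ω⟩ := (two_connected_connected hcard hdel).preconnected y x
  exact cycle_two_vertices_aux hcard hdel ω.toPath.1.length (fun h => hxy h) ω.toPath.1
    ω.toPath.2 le_rfl

end TwoConn


variable {V : Type*} [DecidableEq V] {G : SimpleGraph V}
section TwoConn2
variable [Fintype V]

lemma exists_mem_support_ne_ne {t : V} {c : G.Walk t t} (hc : c.IsCycle) (a b : V) :
    ∃ w, w ∈ c.support ∧ w ≠ a ∧ w ≠ b := by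
  have hlen := hc.three_le_length
  have hnd : c.support.tail.Nodup := hc.support_nodup
  have hlen2 : c.support.tail.length = c.length := by
    have h1 : c.support.length = c.length + 1 := c.length_support
    have h2 : c.support.length = c.support.tail.length + 1 := by
      rw [c.support_eq_cons]; simp
    omega
  have hcard3 : 3 ≤ c.support.tail.toFinset.card := by
    rw [List.toFinset_card_of_nodup hnd]
    omega
  have hne : (c.support.tail.toFinset \ {a, b}).Nonempty := by
    rw [← Finset.card_pos]
    have h1 : ({a, b} : Finset V).card ≤ 2 := (Finset.card_insert_le _ _).trans (by simp)
    have h2 := Finset.le_card_sdiff ({a, b} : Finset V) c.support.tail.toFinset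
    omega
  obtain ⟨w, hw⟩ := hne
  rw [Finset.mem_sdiff, List.mem_toFinset, Finset.mem_insert, Finset.mem_singleton] at hw
  push_neg at hw
  exact ⟨w, List.mem_of_mem_tail hw.1, hw.2.1, hw.2.2⟩

/-- Any edge and any vertex of a 2-connected graph lie on a common cycle. -/
lemma cycle_edge_vertex (hcard : 3 ≤ Fintype.card V)
    (hdel : ∀ w : V, (G.induce {x | x ≠ w}).Connected) {u v : V} (hadj : G.Adj u v) (x : V) :
    ∃ (t : V) (c : G.Walk t t), c.IsCycle ∧ s(u, v) ∈ c.edges ∧ x ∈ c.support := by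
  obtain ⟨p0, hp0, he0⟩ := exists_path_avoiding_edge hcard hdel hadj
  by_cases hxu : x = u
  · subst hxu
    exact ⟨x, Walk.cons hadj p0, (Walk.cons_isCycle_iff p0 hadj).mpr ⟨hp0, he0⟩, by simp, by simp⟩
  by_cases hxv : x = v
  · subst hxv
    refine ⟨u, Walk.cons hadj p0, (Walk.cons_isCycle_iff p0 hadj).mpr ⟨hp0, he0⟩, by simp, ?_⟩
    rw [Walk.support_cons]
    exact List.mem_cons_of_mem _ p0.start_mem_support
  obtain ⟨t, C, hC, huC, hxC⟩ := cycle_two_vertices hcard hdel (Ne.symm hxu)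
  by_cases heC : s(u, v) ∈ C.edges
  · exact ⟨t, C, hC, heC, hxC⟩
  have hCu : (C.rotate _ huC).IsCycle := hC.rotate _
  have hrotmem : ∀ z, z ∈ (C.rotate _ huC).support ↔ z ∈ C.support :=
    mem_support_rotate_iff hC huC
  have hrotedge : ∀ f, f ∈ (C.rotate _ huC).edges ↔ f ∈ C.edges :=
    fun f => (C.rotate_edges _ huC).perm.mem_iff
  by_cases hvC : v ∈ C.support
  · -- split the cycle at u and v
    have hvCu : v ∈ (C.rotate _ huC).support := (hrotmem v).mpr hvC
    obtain ⟨hαpath, hβpath, hαβ⟩ := cycle_split_vertex hCu hvCu hadj.ne'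
    set α := (C.rotate _ huC).takeUntil v hvCu with hαdef
    set β := (C.rotate _ huC).dropUntil v hvCu with hβdef
    have hxsplit : x ∈ α.support ∨ x ∈ β.support := by
      have : x ∈ (C.rotate _ huC).support := (hrotmem x).mpr hxC
      rw [← (C.rotate _ huC).take_spec hvCu, Walk.mem_support_append_iff] at this
      exact this
    rcases hxsplit with hxα | hxβ
    · refine ⟨v, Walk.cons hadj.symm α, ?_, ?_, ?_⟩
      · refine (Walk.cons_isCycle_iff α hadj.symm).mpr ⟨hαpath, fun hmem => heC ?_⟩
        rw [Sym2.eq_swap] at hmem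
        exact (hrotedge _).mp ((C.rotate _ huC).edges_takeUntil_subset hvCu hmem)
      · rw [Walk.edges_cons, Sym2.eq_swap]
        exact List.mem_cons_self
      · rw [Walk.support_cons]
        exact List.mem_cons_of_mem _ hxα
    · refine ⟨u, Walk.cons hadj β, ?_, ?_, ?_⟩
      · refine (Walk.cons_isCycle_iff β hadj).mpr ⟨hβpath, fun hmem => heC ?_⟩
        exact (hrotedge _).mp ((C.rotate _ huC).edges_dropUntil_subset hvCu hmem)
      · rw [Walk.edges_cons]
        exact List.mem_cons_self
      · rw [Walk.support_cons]
        exact List.mem_cons_of_mem _ hxβ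
  · -- v off the cycle: attach a path from v into the cycle
    obtain ⟨ω, hωav⟩ := reach_avoid hdel (w := u) (x := v) (y := x) hadj.ne' hxu
    obtain ⟨t', ht'C, ρ, hρpath, hρsub, hρL⟩ := exists_first_hit ω C.support hxC
    have huρ : u ∉ ρ.support := fun hm => hωav (hρsub _ hm)
    have ht'u : t' ≠ u := fun hh => huρ (hh ▸ ρ.end_mem_support)
    have hvt' : v ≠ t' := fun hh => hvC (hh ▸ ht'C)
    have hρlen : ρ.length ≠ 0 := length_ne_zero_of_ne ρ hvt'
    have ht'Cu : t' ∈ (C.rotate _ huC).support := (hrotmem t').mpr ht'C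
    obtain ⟨hαpath, hβpath, hαβ⟩ := cycle_split_vertex hCu ht'Cu ht'u
    set α := (C.rotate _ huC).takeUntil t' ht'Cu with hαdef
    set β := (C.rotate _ huC).dropUntil t' ht'Cu with hβdef
    have hxsplit : x ∈ α.support ∨ x ∈ β.support := by
      have : x ∈ (C.rotate _ huC).support := (hrotmem x).mpr hxC
      rw [← (C.rotate _ huC).take_spec ht'Cu, Walk.mem_support_append_iff] at this
      exact this
    have hPpath : (Walk.cons hadj ρ).IsPath := hρpath.cons huρ
    have hPlen : (Walk.cons hadj ρ).length = ρ.length + 1 := by simp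
    rcases hxsplit with hxα | hxβ
    · -- cyc := α ++ (cons hadj ρ).reverse
      refine ⟨u, α.append (Walk.cons hadj ρ).reverse, ?_, ?_, ?_⟩
      · apply isCycle_append ht'u.symm hαpath ((Walk.isPath_reverse_iff _).mpr hPpath)
        · intro z hzα hzq
          rw [Walk.support_reverse, List.mem_reverse, Walk.support_cons, List.mem_cons] at hzq
          rcases hzq with rfl | hzρ
          · exact Or.inl rfl
          · exact Or.inr (hρL z hzρ ((hrotmem z).mp
              ((C.rotate _ huC).support_takeUntil_subset ht'Cu hzα)))
        · have h1 : α.length ≠ 0 := length_ne_zero_of_ne α (Ne.symm ht'u)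
          rw [Walk.length_reverse, hPlen]
          omega
      · rw [Walk.edges_append, List.mem_append, Walk.edges_reverse, List.mem_reverse,
          Walk.edges_cons]
        exact Or.inr (List.mem_cons_self)
      · rw [Walk.mem_support_append_iff]
        exact Or.inl hxα
    · -- cyc := (cons hadj ρ) ++ β
      refine ⟨u, (Walk.cons hadj ρ).append β, ?_, ?_, ?_⟩
      · apply isCycle_append (Ne.symm ht'u) hPpath hβpath
        · intro z hzq hzβ
          rw [Walk.support_cons, List.mem_cons] at hzq
          rcases hzq with rfl | hzρ
          · exact Or.inl rfl
          · exact Or.inr (hρL z hzρ ((hrotmem z).mp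
              ((C.rotate _ huC).support_dropUntil_subset ht'Cu hzβ)))
        · have h1 : β.length ≠ 0 := length_ne_zero_of_ne β ht'u
          rw [hPlen]
          omega
      · rw [Walk.edges_append, List.mem_append, Walk.edges_cons]
        exact Or.inl (List.mem_cons_self)
      · rw [Walk.mem_support_append_iff]
        exact Or.inr hxβ

/-- Any two edges of a 2-connected graph lie on a common cycle. -/
lemma cycle_two_edges (hcard : 3 ≤ Fintype.card V)
    (hdel : ∀ w : V, (G.induce {x | x ≠ w}).Connected) {u v a b : V}
    (he : G.Adj u v) (hf : G.Adj a b) :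
    ∃ (t : V) (c : G.Walk t t), c.IsCycle ∧ s(u, v) ∈ c.edges ∧ s(a, b) ∈ c.edges := by
  obtain ⟨t, C, hC, heC, haC⟩ := cycle_edge_vertex hcard hdel he a
  by_cases hfC : s(a, b) ∈ C.edges
  · exact ⟨t, C, hC, heC, hfC⟩
  have hef : s(u, v) ≠ s(a, b) := fun hh => hfC (hh ▸ heC)
  have hCa : (C.rotate _ haC).IsCycle := hC.rotate _
  have hrotmem : ∀ z, z ∈ (C.rotate _ haC).support ↔ z ∈ C.support :=
    mem_support_rotate_iff hC haC
  have hrotedge : ∀ f, f ∈ (C.rotate _ haC).edges ↔ f ∈ C.edges :=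
    fun f => (C.rotate_edges _ haC).perm.mem_iff
  have heCa : s(u, v) ∈ (C.rotate _ haC).edges := (hrotedge _).mpr heC
  by_cases hbC : b ∈ C.support
  · -- split at a and b; bridge with the edge f
    have hbCa : b ∈ (C.rotate _ haC).support := (hrotmem b).mpr hbC
    obtain ⟨hαpath, hβpath, hαβ⟩ := cycle_split_vertex hCa hbCa hf.ne'
    set α := (C.rotate _ haC).takeUntil b hbCa with hαdef
    set β := (C.rotate _ haC).dropUntil b hbCa with hβdef
    have hesplit : s(u, v) ∈ α.edges ∨ s(u, v) ∈ β.edges := by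
      rw [← List.mem_append, ← Walk.edges_append, (C.rotate _ haC).take_spec hbCa]
      exact heCa
    rcases hesplit with heα | heβ
    · refine ⟨a, α.append (Walk.cons hf.symm Walk.nil), ?_, ?_, ?_⟩
      · apply isCycle_append hf.ne hαpath
        · exact (Walk.cons_isPath_iff _ _).mpr ⟨Walk.IsPath.nil, by simp [Ne.symm hf.ne]⟩
        · intro z hzα hzq
          simp only [Walk.support_cons, Walk.support_nil, List.mem_cons,
            List.mem_singleton] at hzq
          tauto
        · have := two_le_length_of_mem_edge_ne hαpath heα (by
            intro hh
            exact hef (by rw [hh]))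
          simp only [Walk.length_cons, Walk.length_nil]
          omega
      · rw [Walk.edges_append, List.mem_append]
        exact Or.inl heα
      · rw [Walk.edges_append, List.mem_append, Walk.edges_cons, Sym2.eq_swap]
        exact Or.inr (List.mem_cons_self)
    · refine ⟨a, (Walk.cons hf Walk.nil).append β, ?_, ?_, ?_⟩
      · apply isCycle_append hf.ne
        · exact (Walk.cons_isPath_iff _ _).mpr ⟨Walk.IsPath.nil, by simp [hf.ne]⟩
        · exact hβpath
        · intro z hzq hzβ
          simp only [Walk.support_cons, Walk.support_nil, List.mem_cons,
            List.mem_singleton] at hzq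
          tauto
        · have := two_le_length_of_mem_edge_ne hβpath heβ
            (fun hh => hef (hh.trans Sym2.eq_swap))
          simp only [Walk.length_cons, Walk.length_nil]
          omega
      · rw [Walk.edges_append, List.mem_append]
        exact Or.inr heβ
      · rw [Walk.edges_append, List.mem_append, Walk.edges_cons]
        exact Or.inl (List.mem_cons_self)
  · -- b off the cycle
    obtain ⟨w₀, hw₀C, hw₀a, hw₀b⟩ := exists_mem_support_ne_ne hC a b
    obtain ⟨ω, hωav⟩ := reach_avoid hdel (w := a) (x := b) (y := w₀) hf.ne' hw₀a
    obtain ⟨t', ht'C, ρ, hρpath, hρsub, hρL⟩ := exists_first_hit ω C.support hw₀C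
    have haρ : a ∉ ρ.support := fun hm => hωav (hρsub _ hm)
    have ht'a : t' ≠ a := fun hh => haρ (hh ▸ ρ.end_mem_support)
    have hbt' : b ≠ t' := fun hh => hbC (hh ▸ ht'C)
    have hρlen : ρ.length ≠ 0 := length_ne_zero_of_ne ρ hbt'
    have ht'Ca : t' ∈ (C.rotate _ haC).support := (hrotmem t').mpr ht'C
    obtain ⟨hαpath, hβpath, hαβ⟩ := cycle_split_vertex hCa ht'Ca ht'a
    set α := (C.rotate _ haC).takeUntil t' ht'Ca with hαdef
    set β := (C.rotate _ haC).dropUntil t' ht'Ca with hβdef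
    have hesplit : s(u, v) ∈ α.edges ∨ s(u, v) ∈ β.edges := by
      rw [← List.mem_append, ← Walk.edges_append, (C.rotate _ haC).take_spec ht'Ca]
      exact heCa
    have hPpath : (Walk.cons hf ρ).IsPath := hρpath.cons haρ
    have hPlen : (Walk.cons hf ρ).length = ρ.length + 1 := by simp
    rcases hesplit with heα | heβ
    · refine ⟨a, α.append (Walk.cons hf ρ).reverse, ?_, ?_, ?_⟩
      · apply isCycle_append ht'a.symm hαpath ((Walk.isPath_reverse_iff _).mpr hPpath)
        · intro z hzα hzq
          rw [Walk.support_reverse, List.mem_reverse, Walk.support_cons, List.mem_cons] at hzq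
          rcases hzq with rfl | hzρ
          · exact Or.inl rfl
          · exact Or.inr (hρL z hzρ ((hrotmem z).mp
              ((C.rotate _ haC).support_takeUntil_subset ht'Ca hzα)))
        · have h1 : α.length ≠ 0 := length_ne_zero_of_ne α (Ne.symm ht'a)
          rw [Walk.length_reverse, hPlen]
          omega
      · rw [Walk.edges_append, List.mem_append]
        exact Or.inl heα
      · rw [Walk.edges_append, List.mem_append, Walk.edges_reverse, List.mem_reverse,
          Walk.edges_cons]
        exact Or.inr (List.mem_cons_self)
    · refine ⟨a, (Walk.cons hf ρ).append β, ?_, ?_, ?_⟩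
      · apply isCycle_append (Ne.symm ht'a) hPpath hβpath
        · intro z hzq hzβ
          rw [Walk.support_cons, List.mem_cons] at hzq
          rcases hzq with rfl | hzρ
          · exact Or.inl rfl
          · exact Or.inr (hρL z hzρ ((hrotmem z).mp
              ((C.rotate _ haC).support_dropUntil_subset ht'Ca hzβ)))
        · have h1 : β.length ≠ 0 := length_ne_zero_of_ne β ht'a
          rw [hPlen]
          omega
      · rw [Walk.edges_append, List.mem_append]
        exact Or.inr heβ
      · rw [Walk.edges_append, List.mem_append, Walk.edges_cons]
        exact Or.inl (List.mem_cons_self)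

end TwoConn2

variable {V : Type*} [DecidableEq V] {G : SimpleGraph V}

lemma path_split_inter {a b z : V} {p : G.Walk a b} (hp : p.IsPath) (hz : z ∈ p.support) :
    ∀ x, x ∈ (p.takeUntil z hz).support → x ∈ (p.dropUntil z hz).support → x = z := by
  intro x hxt hxd
  have hspec := congrArg Walk.support (p.take_spec hz)
  rw [Walk.support_append] at hspec
  have hsupp : p.support = (p.takeUntil z hz).support ++ (p.dropUntil z hz).support.tail :=
    hspec.symm
  have hnd := hp.support_nodup
  rw [hsupp, List.nodup_append'] at hnd
  rw [(p.dropUntil z hz).support_eq_cons, List.mem_cons] at hxd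
  rcases hxd with rfl | hxd
  · rfl
  · exact absurd hxd (List.disjoint_left.mp hnd.2.2 hxt)

lemma edge_of_length_one {u v : V} (p : G.Walk u v) (h : p.length = 1) :
    G.Adj u v ∧ s(u, v) ∈ p.edges := by
  cases p with
  | nil => simp at h
  | @cons _ m _ hadj r =>
    have hm : m = v := by
      have : r.length = 0 := by
        simp only [Walk.length_cons] at h
        omega
      exact eq_of_length_zero r this
    subst hm
    exact ⟨hadj, by simp⟩

section Shortcut
variable {D : Finset (Sym2 V)}

lemma shortcut (hconn : (G.deleteEdges ↑D).Connected)
    {t : V} {c : G.Walk t t} (hc : c.IsCycle) {e : Sym2 V} (hec : e ∈ c.edges) (heD : e ∉ D)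
    (hn : 2 ≤ (c.edges.toFinset ∩ D).card) :
    ∃ (t' : V) (c' : G.Walk t' t'), c'.IsCycle ∧ e ∈ c'.edges ∧
      1 ≤ (c'.edges.toFinset ∩ D).card ∧
      (c'.edges.toFinset ∩ D).card < (c.edges.toFinset ∩ D).card := by
  classical
  obtain ⟨d₂, hd₂⟩ : (c.edges.toFinset ∩ D).Nonempty := Finset.card_pos.mp (by omega)
  revert hd₂
  induction d₂ using Sym2.ind with
  | _ x₂ y₂ =>
  intro hd₂
  rw [Finset.mem_inter, List.mem_toFinset] at hd₂
  obtain ⟨hd₂c, hd₂D⟩ := hd₂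
  have hadj₂ : G.Adj x₂ y₂ := c.adj_of_mem_edges hd₂c
  obtain ⟨P, hPpath, hPne, hPsuppiff, hPf⟩ := cycle_split_edge hc hd₂c
  have heP : e ∈ P.edges := by
    rw [← List.mem_toFinset, hPf, Finset.mem_erase]
    exact ⟨fun hh => heD (hh ▸ hd₂D), List.mem_toFinset.mpr hec⟩
  have hPD : P.edges.toFinset ∩ D = (c.edges.toFinset ∩ D).erase s(x₂, y₂) := by
    ext f
    rw [hPf]
    simp only [Finset.mem_inter, Finset.mem_erase]
    tauto
  have hd₂mem : s(x₂, y₂) ∈ c.edges.toFinset ∩ D := by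
    rw [Finset.mem_inter, List.mem_toFinset]; exact ⟨hd₂c, hd₂D⟩
  have hPDcard : (P.edges.toFinset ∩ D).card = (c.edges.toFinset ∩ D).card - 1 := by
    rw [hPD, Finset.card_erase_of_mem hd₂mem]
  obtain ⟨d₁, hd₁⟩ : (P.edges.toFinset ∩ D).Nonempty := Finset.card_pos.mp (by omega)
  revert hd₁
  induction d₁ using Sym2.ind with
  | _ xx yy =>
  intro hd₁
  have hd₁PD : s(xx, yy) ∈ P.edges.toFinset ∩ D := hd₁
  rw [Finset.mem_inter, List.mem_toFinset] at hd₁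
  obtain ⟨hd₁P, hd₁D⟩ := hd₁
  obtain ⟨x1, y1, A₁, hadj', A₂, hd₁eq2, hP⟩ := split_at_edge P hd₁P
  rw [← hd₁eq2] at hd₁D hd₁PD
  have hd₁D' : s(x1, y1) ∈ D := hd₁D
  have hPsupp : P.support = A₁.support ++ A₂.support := by
    rw [hP, Walk.support_append, Walk.support_cons]
    rfl
  have hPedges : P.edges = A₁.edges ++ (s(x1, y1) :: A₂.edges) := by
    rw [hP, Walk.edges_append, Walk.edges_cons]
  have hnd := hPpath.support_nodup
  rw [hPsupp, List.nodup_append'] at hnd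
  obtain ⟨hndA₁, hndA₂, hdisj⟩ := hnd
  have hed := hPpath.isTrail.edges_nodup
  rw [hPedges, List.nodup_append'] at hed
  obtain ⟨hedA₁, hedA₂', heddisj⟩ := hed
  rw [List.nodup_cons] at hedA₂'
  obtain ⟨hd₁notA₂, hedA₂⟩ := hedA₂'
  have hd₁notA₁ : s(x1, y1) ∉ A₁.edges := fun hh => heddisj hh (by simp)
  have hA₁path : A₁.IsPath := ⟨⟨hedA₁⟩, hndA₁⟩
  have hA₂path : A₂.IsPath := ⟨⟨hedA₂⟩, hndA₂⟩
  -- the ear coming from connectivity of G - D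
  obtain ⟨ω⟩ := hconn.preconnected x1 y1
  obtain ⟨w, hwA₂, η, hηpath, hηsub, hηL⟩ :=
    exists_first_hit ω A₂.support (by exact A₂.start_mem_support)
  obtain ⟨z, hzA₁, ζ, hζpath, hζsub, hζL⟩ :=
    exists_first_hit η.reverse A₁.support A₁.end_mem_support
  have hζA₂ : ∀ q, q ∈ ζ.support → q ∈ A₂.support → q = w := by
    intro q hq hqA₂
    have hq' : q ∈ η.support := by
      have := hζsub q hq
      rwa [Walk.support_reverse, List.mem_reverse] at this
    exact hηL q hq' hqA₂
  have hzw : z ≠ w := by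
    intro hh
    exact (List.disjoint_left.mp hdisj hzA₁) (hh ▸ hwA₂)
  have hζlen : ζ.length ≠ 0 := length_ne_zero_of_ne ζ (Ne.symm hzw)
  have hζD : ∀ f ∈ ζ.edges, f ∉ D := by
    intro f hf
    have h1 := ζ.edges_subset_edgeSet hf
    rw [SimpleGraph.edgeSet_deleteEdges] at h1
    exact fun hcon => h1.2 (by exact_mod_cast hcon)
  have hζGpath : (ζ.mapLe (G.deleteEdges_le (↑D : Set (Sym2 V)))).IsPath :=
    (Walk.mapLe_isPath _).mpr hζpath
  set ζG : G.Walk w z := ζ.mapLe (G.deleteEdges_le _) with hζGdef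
  have hζGsupp : ζG.support = ζ.support := support_mapLe _ _
  have hζGedges : ζG.edges = ζ.edges := edges_mapLe _ _
  have hζGlen : ζG.length = ζ.length := length_mapLe _ _
  -- split A₁ at z and A₂ at w
  set B₁ := A₁.takeUntil z hzA₁ with hB₁
  set B₂ := A₁.dropUntil z hzA₁ with hB₂
  set C₁ := A₂.takeUntil w hwA₂ with hC₁
  set C₂ := A₂.dropUntil w hwA₂ with hC₂
  have hB₁path : B₁.IsPath := hA₁path.takeUntil hzA₁
  have hB₂path : B₂.IsPath := hA₁path.dropUntil hzA₁
  have hC₁path : C₁.IsPath := hA₂path.takeUntil hwA₂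
  have hC₂path : C₂.IsPath := hA₂path.dropUntil hwA₂
  have hB₁sub : ∀ q, q ∈ B₁.support → q ∈ A₁.support := fun q hq => A₁.support_takeUntil_subset hzA₁ hq
  have hB₂sub : ∀ q, q ∈ B₂.support → q ∈ A₁.support := fun q hq => A₁.support_dropUntil_subset hzA₁ hq
  have hC₁sub : ∀ q, q ∈ C₁.support → q ∈ A₂.support := fun q hq => A₂.support_takeUntil_subset hwA₂ hq
  have hC₂sub : ∀ q, q ∈ C₂.support → q ∈ A₂.support := fun q hq => A₂.support_dropUntil_subset hwA₂ hq
  have hB₁e : ∀ f, f ∈ B₁.edges → f ∈ A₁.edges := fun f hf => A₁.edges_takeUntil_subset hzA₁ hf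
  have hB₂e : ∀ f, f ∈ B₂.edges → f ∈ A₁.edges := fun f hf => A₁.edges_dropUntil_subset hzA₁ hf
  have hC₁e : ∀ f, f ∈ C₁.edges → f ∈ A₂.edges := fun f hf => A₂.edges_takeUntil_subset hwA₂ hf
  have hC₂e : ∀ f, f ∈ C₂.edges → f ∈ A₂.edges := fun f hf => A₂.edges_dropUntil_subset hwA₂ hf
  have hA₁eP : ∀ f, f ∈ A₁.edges → f ∈ P.edges := by
    intro f hf; rw [hPedges, List.mem_append]; exact Or.inl hf
  have hA₂eP : ∀ f, f ∈ A₂.edges → f ∈ P.edges := by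
    intro f hf; rw [hPedges, List.mem_append]; exact Or.inr (List.mem_cons_of_mem _ hf)
  -- locate e
  have hesplit : (e ∈ B₂.edges ∨ e ∈ C₁.edges) ∨ (e ∈ B₁.edges ∨ e ∈ C₂.edges) := by
    have h1 : e ∈ A₁.edges ∨ e ∈ A₂.edges := by
      rw [hPedges, List.mem_append, List.mem_cons] at heP
      rcases heP with h | h | h
      · exact Or.inl h
      · exact absurd (h ▸ hd₁D') heD
      · exact Or.inr h
    rcases h1 with h | h
    · rw [← A₁.take_spec hzA₁, Walk.edges_append, List.mem_append] at h
      rcases h with h | h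
      · exact Or.inr (Or.inl h)
      · exact Or.inl (Or.inl h)
    · rw [← A₂.take_spec hwA₂, Walk.edges_append, List.mem_append] at h
      rcases h with h | h
      · exact Or.inl (Or.inr h)
      · exact Or.inr (Or.inr h)
  rcases hesplit with heI | heII
  · -- CASE I : cycle (B₂ + d₁ + C₁) ++ ζG,  where ζG : w → z... (need z→w then w→z)
    set pcomp : G.Walk z w := B₂.append (Walk.cons hadj' C₁) with hpcomp
    have hpcomp_path : pcomp.IsPath := by
      apply isPath_append' hB₂path
      · apply hC₁path.cons
        intro hmem
        exact (List.disjoint_left.mp hdisj A₁.end_mem_support) (hC₁sub _ hmem)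
      · intro q hq1 hq2
        rw [Walk.support_cons, List.mem_cons] at hq2
        rcases hq2 with rfl | hq2
        · rfl
        · exact absurd (hC₁sub _ hq2) (List.disjoint_left.mp hdisj (hB₂sub _ hq1))
    have hpcomp_supp : ∀ q, q ∈ pcomp.support → q ∈ A₁.support ∨ q ∈ A₂.support := by
      intro q hq
      rw [hpcomp, Walk.mem_support_append_iff] at hq
      rcases hq with hq | hq
      · exact Or.inl (hB₂sub _ hq)
      · rw [Walk.support_cons, List.mem_cons] at hq
        rcases hq with rfl | hq
        · exact Or.inl A₁.end_mem_support
        · exact Or.inr (hC₁sub _ hq)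
    have hpcomp_len : pcomp.length = B₂.length + C₁.length + 1 := by
      rw [hpcomp, Walk.length_append, Walk.length_cons]
      omega
    have hpcomp_edges : pcomp.edges = B₂.edges ++ (s(x1, y1) :: C₁.edges) := by
      rw [hpcomp, Walk.edges_append, Walk.edges_cons]
    have hcyc : (pcomp.append ζG).IsCycle := by
      apply isCycle_append hzw hpcomp_path hζGpath
      · intro q hq1 hq2
        rw [hζGsupp] at hq2
        rcases hpcomp_supp q hq1 with hq | hq
        · exact Or.inl (hζL q hq2 hq)
        · exact Or.inr (hζA₂ q hq2 hq)
      · by_contra hL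
        push_neg at hL
        have hB₂0 : B₂.length = 0 := by omega
        have hC₁0 : C₁.length = 0 := by omega
        have hζ1 : ζ.length = 1 := by omega
        have hzx : z = x1 := eq_of_length_zero B₂ hB₂0
        have hyw : y1 = w := eq_of_length_zero C₁ hC₁0
        obtain ⟨hHadj, -⟩ := edge_of_length_one ζ hζ1
        rw [SimpleGraph.deleteEdges_adj] at hHadj
        apply hHadj.2
        rw [hyw.symm, hzx]
        rw [Sym2.eq_swap]
        exact_mod_cast hd₁D'
    refine ⟨z, pcomp.append ζG, hcyc, ?_, ?_, ?_⟩
    · rw [Walk.edges_append, List.mem_append, hpcomp_edges, List.mem_append, List.mem_cons]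
      rcases heI with h | h
      · exact Or.inl (Or.inl h)
      · exact Or.inl (Or.inr (Or.inr h))
    · apply Finset.card_pos.mpr
      refine ⟨s(x1, y1), ?_⟩
      rw [Finset.mem_inter, List.mem_toFinset, Walk.edges_append, List.mem_append,
        hpcomp_edges, List.mem_append, List.mem_cons]
      exact ⟨Or.inl (Or.inr (Or.inl rfl)), hd₁D'⟩
    · have hsub : (pcomp.append ζG).edges.toFinset ∩ D ⊆ (c.edges.toFinset ∩ D).erase s(x₂, y₂) := by
        intro f hf
        rw [Finset.mem_inter, List.mem_toFinset, Walk.edges_append, List.mem_append,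
          hpcomp_edges, List.mem_append, List.mem_cons] at hf
        obtain ⟨hfe, hfD⟩ := hf
        rw [← hPD, Finset.mem_inter, List.mem_toFinset]
        rcases hfe with ((h | h | h) | h)
        · exact ⟨hA₁eP _ (hB₂e _ h), hfD⟩
        · subst h
          rw [hPedges, List.mem_append]
          exact ⟨Or.inr (List.mem_cons_self), hfD⟩
        · exact ⟨hA₂eP _ (hC₁e _ h), hfD⟩
        · rw [hζGedges] at h
          exact absurd hfD (hζD _ h)
      have h1 := Finset.card_le_card hsub
      rw [Finset.card_erase_of_mem hd₂mem] at h1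
      omega
  · -- CASE II : cycle (C₂ + d₂-edge + B₁) ++ ζG.reverse
    set pcomp : G.Walk w z := C₂.append (Walk.cons hadj₂.symm B₁) with hpcomp
    have hy₂B₁ : y₂ ∉ B₁.support := by
      intro hmem
      exact (List.disjoint_left.mp hdisj (hB₁sub _ hmem)) A₂.end_mem_support
    have hpcomp_path : pcomp.IsPath := by
      apply isPath_append' hC₂path
      · exact hB₁path.cons hy₂B₁
      · intro q hq1 hq2
        rw [Walk.support_cons, List.mem_cons] at hq2
        rcases hq2 with rfl | hq2
        · rfl
        · exact absurd (hC₂sub _ hq1) (List.disjoint_left.mp hdisj (hB₁sub _ hq2))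
    have hpcomp_supp : ∀ q, q ∈ pcomp.support → q ∈ A₁.support ∨ q ∈ A₂.support := by
      intro q hq
      rw [hpcomp, Walk.mem_support_append_iff] at hq
      rcases hq with hq | hq
      · exact Or.inr (hC₂sub _ hq)
      · rw [Walk.support_cons, List.mem_cons] at hq
        rcases hq with rfl | hq
        · exact Or.inr A₂.end_mem_support
        · exact Or.inl (hB₁sub _ hq)
    have hpcomp_len : pcomp.length = C₂.length + B₁.length + 1 := by
      rw [hpcomp, Walk.length_append, Walk.length_cons]
      omega
    have hpcomp_edges : pcomp.edges = C₂.edges ++ (s(y₂, x₂) :: B₁.edges) := by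
      rw [hpcomp, Walk.edges_append, Walk.edges_cons]
    have hcyc : (pcomp.append ζG.reverse).IsCycle := by
      apply isCycle_append (Ne.symm hzw) hpcomp_path ((Walk.isPath_reverse_iff _).mpr hζGpath)
      · intro q hq1 hq2
        rw [Walk.support_reverse, List.mem_reverse, hζGsupp] at hq2
        rcases hpcomp_supp q hq1 with hq | hq
        · exact Or.inr (hζL q hq2 hq)
        · exact Or.inl (hζA₂ q hq2 hq)
      · rw [Walk.length_reverse]
        by_contra hL
        push_neg at hL
        have hC₂0 : C₂.length = 0 := by omega
        have hB₁0 : B₁.length = 0 := by omega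
        have hζ1 : ζ.length = 1 := by omega
        have hwy : w = y₂ := eq_of_length_zero C₂ hC₂0
        have hxz : x₂ = z := eq_of_length_zero B₁ hB₁0
        obtain ⟨hHadj, -⟩ := edge_of_length_one ζ hζ1
        rw [SimpleGraph.deleteEdges_adj] at hHadj
        apply hHadj.2
        rw [hwy, ← hxz]
        rw [Sym2.eq_swap]
        exact_mod_cast hd₂D
    refine ⟨w, pcomp.append ζG.reverse, hcyc, ?_, ?_, ?_⟩
    · rw [Walk.edges_append, List.mem_append, hpcomp_edges, List.mem_append, List.mem_cons]
      rcases heII with h | h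
      · exact Or.inl (Or.inr (Or.inr h))
      · exact Or.inl (Or.inl h)
    · apply Finset.card_pos.mpr
      refine ⟨s(y₂, x₂), ?_⟩
      rw [Finset.mem_inter, List.mem_toFinset, Walk.edges_append, List.mem_append,
        hpcomp_edges, List.mem_append, List.mem_cons]
      refine ⟨Or.inl (Or.inr (Or.inl rfl)), ?_⟩
      rw [Sym2.eq_swap]
      exact hd₂D
    · have hd₁PD' : s(x1, y1) ∈ P.edges.toFinset ∩ D := hd₁PD
      have hsub : (pcomp.append ζG.reverse).edges.toFinset ∩ D ⊆
          insert s(x₂, y₂) ((P.edges.toFinset ∩ D).erase s(x1, y1)) := by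
        intro f hf
        rw [Finset.mem_inter, List.mem_toFinset, Walk.edges_append, List.mem_append,
          hpcomp_edges, List.mem_append, List.mem_cons] at hf
        obtain ⟨hfe, hfD⟩ := hf
        rw [Finset.mem_insert, Finset.mem_erase, Finset.mem_inter, List.mem_toFinset]
        rcases hfe with ((h | h | h) | h)
        · exact Or.inr ⟨fun hh => hd₁notA₂ (hh ▸ hC₂e _ h), ⟨hA₂eP _ (hC₂e _ h), hfD⟩⟩
        · subst h
          rw [Sym2.eq_swap]
          exact Or.inl rfl
        · exact Or.inr ⟨fun hh => hd₁notA₁ (hh ▸ hB₁e _ h), ⟨hA₁eP _ (hB₁e _ h), hfD⟩⟩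
        · rw [Walk.edges_reverse, List.mem_reverse, hζGedges] at h
          exact absurd hfD (hζD _ h)
      have h1 := Finset.card_le_card hsub
      have h2 := Finset.card_insert_le s(x₂, y₂) ((P.edges.toFinset ∩ D).erase s(x1, y1))
      rw [Finset.card_erase_of_mem hd₁PD'] at h2
      omega

end Shortcut

end DCycleAux

end Aux

open SimpleGraph

/-- Let `G` be 2-vertex-connected and `D` a nonempty set of edges such that `G - D` is
connected. Then every edge of `G` belongs to a cycle containing exactly one edge of `D`. -/
theorem every_edge_in_D_cycle (G : SimpleGraph V) (h2 : TwoConnected G)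
    (D : Finset (Sym2 V)) (hD : ↑D ⊆ G.edgeSet) (hne : D.Nonempty)
    (hconn : (G.deleteEdges ↑D).Connected) :
    ∀ e ∈ G.edgeSet, ∃ s : Finset (Sym2 V), IsCycleEdges G s ∧ (s ∩ D).card = 1 ∧ e ∈ s := by
  classical
  obtain ⟨hcard, hdel⟩ := h2
  intro e he
  induction e using Sym2.ind with
  | _ u v =>
  rw [SimpleGraph.mem_edgeSet] at he
  by_cases heD : s(u, v) ∈ D
  · -- the edge is itself in D: close it up with a path in G - D
    obtain ⟨ω⟩ := hconn.preconnected v u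
    have hppath : (ω.toPath.val : (G.deleteEdges ↑D).Walk v u).IsPath := ω.toPath.property
    set p : (G.deleteEdges ↑D).Walk v u := ω.toPath.val with hp
    have hpD : ∀ f ∈ p.edges, f ∉ D := by
      intro f hf
      have h1 := p.edges_subset_edgeSet hf
      rw [SimpleGraph.edgeSet_deleteEdges] at h1
      exact fun hcon => h1.2 (by exact_mod_cast hcon)
    set pG : G.Walk v u := p.mapLe (G.deleteEdges_le _) with hpG
    have hpGpath : pG.IsPath := (Walk.mapLe_isPath _).mpr hppath
    have hpGedges : pG.edges = p.edges := DCycleAux.edges_mapLe _ _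
    have hcyc : (Walk.cons he pG).IsCycle := by
      refine (Walk.cons_isCycle_iff pG he).mpr ⟨hpGpath, fun hmem => ?_⟩
      rw [hpGedges] at hmem
      exact hpD _ hmem heD
    refine ⟨(Walk.cons he pG).edges.toFinset, ⟨u, Walk.cons he pG, hcyc, rfl⟩, ?_, ?_⟩
    · have : (Walk.cons he pG).edges.toFinset ∩ D = {s(u, v)} := by
        ext f
        rw [Finset.mem_inter, List.mem_toFinset, Walk.edges_cons, List.mem_cons,
          Finset.mem_singleton]
        constructor
        · rintro ⟨rfl | hf, hfD⟩
          · rfl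
          · rw [hpGedges] at hf
            exact absurd hfD (hpD _ hf)
        · rintro rfl
          exact ⟨Or.inl rfl, heD⟩
      rw [this, Finset.card_singleton]
    · rw [List.mem_toFinset, Walk.edges_cons]
      exact List.mem_cons_self
  · -- the edge is not in D : take a cycle through it and a D-edge, and shorten
    obtain ⟨d₀, hd₀⟩ := hne
    have key : ∀ (n : ℕ) (t : V) (c : G.Walk t t), c.IsCycle → s(u, v) ∈ c.edges →
        (c.edges.toFinset ∩ D).card = n → 1 ≤ n →
        ∃ s : Finset (Sym2 V), IsCycleEdges G s ∧ (s ∩ D).card = 1 ∧ s(u, v) ∈ s := by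
      intro n
      induction n using Nat.strong_induction_on with
      | _ n ih =>
        intro t c hc hec hcount h1n
        by_cases h2n : n = 1
        · refine ⟨c.edges.toFinset, ⟨t, c, hc, rfl⟩, ?_, List.mem_toFinset.mpr hec⟩
          rw [hcount, h2n]
        · have hn2 : 2 ≤ (c.edges.toFinset ∩ D).card := by omega
          obtain ⟨t', c', hc', hec', hge, hlt⟩ :=
            DCycleAux.shortcut hconn hc hec heD hn2
          exact ih _ (by omega) t' c' hc' hec' rfl hge
    revert hd₀
    induction d₀ using Sym2.ind with
    | _ a b =>
    intro hd₀
    have hfadj : G.Adj a b := by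
      rw [← SimpleGraph.mem_edgeSet]
      exact hD hd₀
    obtain ⟨t, C, hC, heC, hfC⟩ := DCycleAux.cycle_two_edges hcard hdel he hfadj
    have h1 : 1 ≤ (C.edges.toFinset ∩ D).card := by
      apply Finset.card_pos.mpr
      exact ⟨s(a, b), Finset.mem_inter.mpr ⟨List.mem_toFinset.mpr hfC, hd₀⟩⟩
    exact key _ t C hC heC rfl h1
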